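/- arXiv:2512.20767 — 3 statements merged into one kernel-verified Lean document; each statement's English description precedes it below -/
import Mathlib

section
/- Let G be a countable group and let μ be a Borel probability measure on Sub(G) that is invariant under the conjugation action of G (i.e. the pushforward of μ under H ↦ gHg^{-1} equals μ for every g ∈ G). Then μ-almost every subgroup is a boomerang subgroup of G: μ({H ∈ Sub(G) : H is a boomerang subgroup}) = 1. -/
open Filter

/-- The number of elements of `Γ` of word length at most `R`. -/
noncomputable def growthCount {d : ℕ} (Γ : Subgroup (FreeGroup (Fin d))) (R : ℕ) : ℕ :=
  Nat.card {g : FreeGroup (Fin d) // g ∈ Γ ∧ FreeGroup.norm g ≤ R}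

/-- The critical exponent `δ(Γ) = limsup_R log(c_Γ(R))/R`. -/
noncomputable def critExp {d : ℕ} (Γ : Subgroup (FreeGroup (Fin d))) : ℝ :=
  Filter.atTop.limsup fun R : ℕ => Real.log (growthCount Γ R : ℝ) / (R : ℝ)

/-- Chabauty convergence of a sequence of subgroups. -/
def ChabautyTendsto {G : Type*} [Group G] (H : ℕ → Subgroup G) (L : Subgroup G) : Prop :=
  ∀ g : G, ∀ᶠ n in Filter.atTop, (g ∈ H n ↔ g ∈ L)

/-- A boomerang subgroup. -/
def IsBoomerang {G : Type*} [Group G] (Δ : Subgroup G) : Prop :=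
  ∀ g : G, ∃ n : ℕ → ℕ, StrictMono n ∧
    ChabautyTendsto (fun k => Subgroup.map (MulAut.conj (g ^ n k)).toMonoidHom Δ) Δ

/-- The Chabauty topology on the space of subgroups of `G`, induced from the
product topology on `G → Bool` via the characteristic function of membership. -/
noncomputable instance chabautyTopology (G : Type*) [Group G] :
    TopologicalSpace (Subgroup G) :=
  TopologicalSpace.induced
    (fun (H : Subgroup G) (g : G) => @decide (g ∈ H) (Classical.propDecidable _))
    inferInstance

noncomputable instance chabautyMeasurableSpace (G : Type*) [Group G] :
    MeasurableSpace (Subgroup G) :=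
  borel (Subgroup G)

section Aux

variable {G : Type*} [Group G]

/-- The characteristic map. -/
noncomputable def chabautyChar (G : Type*) [Group G] : Subgroup G → G → Bool :=
  fun H g => @decide (g ∈ H) (Classical.propDecidable _)

lemma chabautyChar_inducing : Topology.IsInducing (chabautyChar G) := ⟨rfl⟩

instance [Countable G] : SecondCountableTopology (Subgroup G) :=
  chabautyChar_inducing.secondCountableTopology

instance : BorelSpace (Subgroup G) := ⟨rfl⟩

lemma mem_conj_map (a x : G) (H : Subgroup G) :
    x ∈ Subgroup.map (MulAut.conj a).toMonoidHom H ↔ a⁻¹ * x * a ∈ H := by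
  rw [Subgroup.mem_map_equiv]
  simp [MulAut.conj]

lemma conj_iterate (g : G) (n : ℕ) (H : Subgroup G) :
    (fun K => Subgroup.map (MulAut.conj g).toMonoidHom K)^[n] H =
      Subgroup.map (MulAut.conj (g ^ n)).toMonoidHom H := by
  induction n with
  | zero => ext x; simp [mem_conj_map]
  | succ n ih =>
      rw [Function.iterate_succ_apply', ih]
      ext x
      rw [mem_conj_map, mem_conj_map, mem_conj_map]
      constructor <;> intro h <;> [skip; skip] <;>
        · convert h using 1; group

lemma conj_continuous (g : G) :
    Continuous (fun K : Subgroup G => Subgroup.map (MulAut.conj g).toMonoidHom K) := by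
  rw [continuous_induced_rng]
  apply continuous_pi
  intro x
  have : (fun K : Subgroup G =>
      chabautyChar G (Subgroup.map (MulAut.conj g).toMonoidHom K) x) =
      fun K : Subgroup G => chabautyChar G K (g⁻¹ * x * g) := by
    funext K
    simp only [chabautyChar]
    exact decide_eq_decide.mpr (mem_conj_map g x K)
  exact this ▸ (continuous_apply (g⁻¹ * x * g)).comp chabautyChar_inducing.continuous

end Aux

theorem irs_ae_boomerang (G : Type*) [Group G] [Countable G]
    (μ : MeasureTheory.Measure (Subgroup G)) [MeasureTheory.IsProbabilityMeasure μ]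
    (hinv : ∀ (g : G) (s : Set (Subgroup G)), MeasurableSet s →
      μ ((fun H => Subgroup.map (MulAut.conj g).toMonoidHom H) ⁻¹' s) = μ s) :
    μ {H : Subgroup G | IsBoomerang H} = 1 := by
  obtain ⟨e, he⟩ := exists_surjective_nat G
  -- a.e. H is boomerang
  have key : ∀ᵐ H ∂μ, IsBoomerang H := by
    simp only [IsBoomerang]
    rw [MeasureTheory.ae_all_iff]
    intro g
    set T := fun K : Subgroup G => Subgroup.map (MulAut.conj g).toMonoidHom K with hT
    have hmeas : Measurable T := (conj_continuous g).measurable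
    have hmp : MeasureTheory.MeasurePreserving T μ μ := by
      refine ⟨hmeas, ?_⟩
      ext s hs
      rw [MeasureTheory.Measure.map_apply hmeas hs]
      exact hinv g s hs
    have hcons := hmp.conservative
    filter_upwards [hcons.ae_frequently_mem_of_mem_nhds] with H hH
    -- neighborhoods fixing finitely many coordinates
    have hnhds : ∀ m : ℕ,
        {K : Subgroup G | ∀ i ≤ m, (e i ∈ K ↔ e i ∈ H)} ∈ nhds H := by
      intro m
      have : IsOpen {K : Subgroup G | ∀ i ≤ m, (e i ∈ K ↔ e i ∈ H)} := by
        have : {K : Subgroup G | ∀ i ≤ m, (e i ∈ K ↔ e i ∈ H)} =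
            chabautyChar G ⁻¹' {b : G → Bool | ∀ i ≤ m, b (e i) = chabautyChar G H (e i)} := by
          ext K
          simp only [Set.mem_setOf_eq, Set.mem_preimage, chabautyChar]
          constructor
          · intro h i hi; exact decide_eq_decide.mpr (h i hi)
          · intro h i hi; exact decide_eq_decide.mp (h i hi)
        rw [this]
        apply IsOpen.preimage chabautyChar_inducing.continuous
        · have : {b : G → Bool | ∀ i ≤ m, b (e i) = chabautyChar G H (e i)} =
              ⋂ i ∈ Set.Iic m, {b : G → Bool | b (e i) = chabautyChar G H (e i)} := by
            ext b; simp [Set.mem_Iic]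
          rw [this]
          refine Set.Finite.isOpen_biInter (Set.finite_Iic m) fun i _ => ?_
          have : {b : G → Bool | b (e i) = chabautyChar G H (e i)} =
              (fun b : G → Bool => b (e i)) ⁻¹' {chabautyChar G H (e i)} := rfl
          rw [this]
          exact (isOpen_discrete _).preimage (continuous_apply (e i))
      exact this.mem_nhds (fun i _ => Iff.rfl)
    have hfreq : ∀ m : ℕ, ∃ᶠ k in atTop, ∀ i ≤ m, (e i ∈ T^[k] H ↔ e i ∈ H) :=
      fun m => hH _ (hnhds m)
    obtain ⟨φ, hφ, hφ'⟩ := extraction_forall_of_frequently hfreq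
    refine ⟨φ, hφ, fun x => ?_⟩
    obtain ⟨i, rfl⟩ := he x
    filter_upwards [eventually_ge_atTop i] with k hk
    have := hφ' k i hk
    rwa [conj_iterate] at this
  -- conclude measure 1
  rw [MeasureTheory.ae_iff] at key
  have h1 : (1 : ENNReal) ≤ μ {H : Subgroup G | IsBoomerang H} := by
    have := MeasureTheory.measure_union_le (μ := μ)
      {H : Subgroup G | IsBoomerang H} {H : Subgroup G | IsBoomerang H}ᶜ
    rw [Set.union_compl_self, MeasureTheory.measure_univ] at this
    calc (1:ENNReal) ≤ _ := this
      _ = μ {H : Subgroup G | IsBoomerang H} := by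
          rw [Set.compl_setOf, key, add_zero]
  exact le_antisymm MeasureTheory.prob_le_one h1
end

section
/- Let d ≥ 2 and let Γ be a subgroup of F_d. Then δ(Γ) = 0 if and only if Γ is cyclic, i.e. generated by a single element (possibly trivial). -/
open Filter

namespace CritExpAux

variable {α : Type*} [DecidableEq α]

/-- No cancellation between adjacent letters. -/
def Ok (p q : α × Bool) : Prop := ¬ (p.1 = q.1 ∧ p.2 = !q.2)

theorem reduce_eq_self_of_chain' {L : List (α × Bool)} (h : List.Chain' Ok L) :
    FreeGroup.reduce L = L := by
  induction L with
  | nil => rfl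
  | cons x L ih =>
    rw [List.Chain', List.isChain_cons] at h
    rw [FreeGroup.reduce.cons, ih h.2]
    cases L with
    | nil => rfl
    | cons hd tl =>
      have : Ok x hd := h.1 hd rfl
      simp only [Ok] at this
      simp [this]

theorem chain'_of_reduce {L : List (α × Bool)} (h : FreeGroup.reduce L = L) :
    List.Chain' Ok L := by
  induction L with
  | nil => exact List.isChain_nil
  | cons x L ih =>
    rw [FreeGroup.reduce.cons] at h
    rcases hL : FreeGroup.reduce L with _ | ⟨hd, tl⟩
    · rw [hL] at h
      simp only at h
      have : L = [] := by simpa using congrArg List.tail h.symm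
      subst this
      simp [List.Chain']
    · rw [hL] at h
      dsimp only at h
      by_cases hc : x.1 = hd.1 ∧ x.2 = !hd.2
      · rw [if_pos hc] at h
        have h1 : (FreeGroup.reduce L).length ≤ L.length := FreeGroup.reduce.red.length_le
        rw [hL] at h1
        have : tl.length = L.length + 1 := by rw [h]; rfl
        simp [this] at h1
      · rw [if_neg hc] at h
        have hL' : L = hd :: tl := by
          have := congrArg List.tail h
          simpa using this.symm
        have : FreeGroup.reduce L = L := by rw [hL, hL']
        refine List.isChain_cons.mpr ⟨?_, ih this⟩
        intro y hy
        rw [hL'] at hy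
        simp only [List.head?_cons, Option.mem_def, Option.some.injEq] at hy
        subst hy
        exact hc

end CritExpAux

namespace CritExpAux

variable {α : Type*} [DecidableEq α]

theorem flatten_chain' {L : List (α × Bool)} (hL : List.Chain' Ok L)
    (hj : ∀ p ∈ L.getLast?, ∀ q ∈ L.head?, Ok p q) (n : ℕ) :
    List.Chain' Ok (List.replicate n L).flatten ∧
      ((List.replicate n L).flatten.head? = none ∨
        (List.replicate n L).flatten.head? = L.head?) := by
  induction n with
  | zero => simp [List.Chain']
  | succ n ih =>
    rw [List.replicate_succ, List.flatten_cons]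
    rcases eq_or_ne L [] with rfl | hne
    · simpa using ih
    constructor
    · rw [List.Chain', List.isChain_append]
      refine ⟨hL, ih.1, ?_⟩
      intro p hp q hq
      rcases ih.2 with h | h
      · rw [h] at hq; simp at hq
      · rw [h] at hq; exact hj p hp q hq
    · right
      rw [List.head?_append, List.head?_eq_head hne]
      rfl

theorem norm_pow_of_cyc_red {L : List (α × Bool)} (hL : List.Chain' Ok L)
    (hj : ∀ p ∈ L.getLast?, ∀ q ∈ L.head?, Ok p q) (n : ℕ) :
    FreeGroup.norm (FreeGroup.mk L ^ n) = n * L.length := by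
  rw [FreeGroup.pow_mk, FreeGroup.norm, FreeGroup.toWord_mk,
    reduce_eq_self_of_chain' (flatten_chain' hL hj n).1]
  simp [List.length_flatten, List.map_replicate, List.sum_replicate, smul_eq_mul]

theorem exists_conj_aux :
    ∀ N : ℕ, ∀ g : FreeGroup α, FreeGroup.norm g ≤ N → g ≠ 1 →
    ∃ w c : FreeGroup α, g = w * c * w⁻¹ ∧ c ≠ 1 ∧
      ∀ n : ℕ, FreeGroup.norm (c ^ n) = n * FreeGroup.norm c := by
  intro N
  induction N with
  | zero =>
    intro g hg hne
    exact absurd (FreeGroup.norm_eq_zero.mp (Nat.le_zero.mp hg)) hne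
  | succ N ih =>
    intro g hg hne
    have hred : FreeGroup.reduce g.toWord = g.toWord := FreeGroup.reduce_toWord g
    have hchain := chain'_of_reduce hred
    have hLne : g.toWord ≠ [] := fun h => hne (FreeGroup.toWord_eq_nil_iff.mp h)
    by_cases hj : ∀ p ∈ g.toWord.getLast?, ∀ q ∈ g.toWord.head?, Ok p q
    · refine ⟨1, g, by group, hne, fun n => ?_⟩
      have := norm_pow_of_cyc_red hchain hj n
      rw [FreeGroup.mk_toWord] at this
      exact this
    · push_neg at hj
      obtain ⟨p, hp, q, hq, hpq⟩ := hj
      have hpq' : p.1 = q.1 ∧ p.2 = !q.2 := not_not.mp hpq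
      obtain ⟨a, T, hT⟩ : ∃ a T, g.toWord = a :: T := by
        cases h : g.toWord with
        | nil => exact absurd h hLne
        | cons a T => exact ⟨a, T, rfl⟩
      have hq' : q = a := by
        rw [hT] at hq
        simp only [List.head?_cons, Option.mem_def, Option.some.injEq] at hq
        exact hq.symm
      rcases eq_or_ne T [] with rfl | hTne
      · -- g.toWord = [a], so p = q = a, contradiction
        have hp' : p = a := by
          rw [hT] at hp
          simp only [List.getLast?_singleton, Option.mem_def, Option.some.injEq] at hp
          exact hp.symm
        rw [hp', hq'] at hpq'
        simp at hpq'
      · -- T ≠ [], write T = M ++ [b]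
        set b := T.getLast hTne with hb
        set M := T.dropLast with hM
        have hTM : T = M ++ [b] := (List.dropLast_concat_getLast hTne).symm
        have hp' : p = b := by
          rw [hT, hTM, ← List.cons_append] at hp
          rw [List.getLast?_concat] at hp
          simp only [Option.mem_def, Option.some.injEq] at hp
          exact hp.symm
        have hbval : b = (a.1, !a.2) := by
          rw [← hp', ← hq']
          exact Prod.ext hpq'.1 (by rw [hpq'.2])
        have hL2 : g.toWord = a :: (M ++ [b]) := by rw [hT, hTM]
        have hchainM : List.Chain' Ok M := by
          have h1 : List.Chain' Ok (M ++ [b]) := by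
            have := hchain
            rw [hL2] at this
            exact (List.isChain_cons.mp this).2
          exact (List.isChain_append.mp h1).1
        have hredM : FreeGroup.reduce M = M := reduce_eq_self_of_chain' hchainM
        have hg_eq : g = FreeGroup.mk [a] * FreeGroup.mk M * (FreeGroup.mk [a])⁻¹ := by
          rw [FreeGroup.inv_mk, FreeGroup.mul_mk, FreeGroup.mul_mk]
          conv_lhs => rw [← FreeGroup.mk_toWord (x := g)]
          congr 1
          have hinv : FreeGroup.invRev [a] = [(a.1, !a.2)] := by
            simp [FreeGroup.invRev]
          rw [hinv, hL2, hbval]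
          simp
        have hMlen : M.length + 2 ≤ N + 1 := by
          have h1 : FreeGroup.norm g = g.toWord.length := rfl
          rw [hL2] at h1
          simp at h1
          omega
        have hMne : FreeGroup.mk M ≠ 1 := by
          intro h1
          rw [h1, mul_one, mul_inv_cancel] at hg_eq
          exact hne hg_eq
        have hnormM : FreeGroup.norm (FreeGroup.mk M) ≤ N := by
          rw [FreeGroup.norm, FreeGroup.toWord_mk, hredM]
          omega
        obtain ⟨w, c, hwc, hc1, hcn⟩ := ih (FreeGroup.mk M) hnormM hMne
        refine ⟨FreeGroup.mk [a] * w, c, ?_, hc1, hcn⟩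
        rw [hg_eq, hwc]
        group

end CritExpAux

namespace CritExpAux

variable {α : Type*} [DecidableEq α]

theorem exists_natAbs_bound (g : FreeGroup α) (hg : g ≠ 1) :
    ∃ K : ℕ, ∀ k : ℤ, k.natAbs ≤ FreeGroup.norm (g ^ k) + K := by
  obtain ⟨w, c, hgw, hc1, hcn⟩ := exists_conj_aux (FreeGroup.norm g) g le_rfl hg
  refine ⟨2 * FreeGroup.norm w, ?_⟩
  have key : ∀ n : ℕ, n ≤ FreeGroup.norm (g ^ n) + 2 * FreeGroup.norm w := by
    intro n
    have h1 : c ^ n = w⁻¹ * g ^ n * w := by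
      rw [hgw, conj_pow]
      group
    have h2 : FreeGroup.norm (c ^ n) ≤
        FreeGroup.norm w + FreeGroup.norm (g ^ n) + FreeGroup.norm w := by
      rw [h1]
      calc FreeGroup.norm (w⁻¹ * g ^ n * w)
          ≤ FreeGroup.norm (w⁻¹ * g ^ n) + FreeGroup.norm w := FreeGroup.norm_mul_le _ _
        _ ≤ FreeGroup.norm w⁻¹ + FreeGroup.norm (g ^ n) + FreeGroup.norm w :=
            Nat.add_le_add_right (FreeGroup.norm_mul_le _ _) _
        _ = FreeGroup.norm w + FreeGroup.norm (g ^ n) + FreeGroup.norm w := by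
            rw [FreeGroup.norm_inv_eq]
    have h3 : n ≤ FreeGroup.norm (c ^ n) := by
      rw [hcn n]
      have hc : 1 ≤ FreeGroup.norm c :=
        Nat.one_le_iff_ne_zero.mpr fun h => hc1 (FreeGroup.norm_eq_zero.mp h)
      calc n = n * 1 := (mul_one n).symm
        _ ≤ n * FreeGroup.norm c := Nat.mul_le_mul_left n hc
    omega
  intro k
  rcases Int.natAbs_eq k with h | h
  · have : g ^ k = g ^ k.natAbs := by conv_lhs => rw [h, zpow_natCast]
    rw [this]
    exact key _
  · have : g ^ k = (g ^ k.natAbs)⁻¹ := by conv_lhs => rw [h, zpow_neg, zpow_natCast]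
    rw [this, FreeGroup.norm_inv_eq]
    exact key _

theorem growth_cyclic (g : FreeGroup α) (hg : g ≠ 1) :
    ∃ K : ℕ, ∀ R : ℕ,
      Nat.card {x : FreeGroup α // x ∈ Subgroup.closure {g} ∧ FreeGroup.norm x ≤ R}
        ≤ 2 * (R + K) + 1 := by
  obtain ⟨K, hK⟩ := exists_natAbs_bound g hg
  refine ⟨K, fun R => ?_⟩
  have hex : ∀ x : {x : FreeGroup α // x ∈ Subgroup.closure {g} ∧ FreeGroup.norm x ≤ R},
      ∃ k : ℤ, g ^ k = x.1 := fun x => Subgroup.mem_closure_singleton.mp x.2.1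
  choose f hf using hex
  have hbound : ∀ x, (f x).natAbs ≤ R + K := by
    intro x
    have := hK (f x)
    rw [hf x] at this
    have h2 := x.2.2
    omega
  have : Nat.card {x : FreeGroup α // x ∈ Subgroup.closure {g} ∧ FreeGroup.norm x ≤ R}
      ≤ Nat.card (Fin (2 * (R + K) + 1)) := by
    refine Nat.card_le_card_of_injective
      (fun x => ⟨(f x + (R + K : ℕ)).toNat, by have := hbound x; omega⟩) ?_
    intro x y hxy
    simp only [Fin.mk.injEq] at hxy
    have hx := hbound x
    have hy := hbound y
    have : f x = f y := by omega
    have : x.1 = y.1 := by rw [← hf x, ← hf y, this]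
    exact Subtype.ext this
  exact this.trans (le_of_eq (by simp))

theorem tendsto_log_lin (c : ℝ) :
    Filter.Tendsto (fun R : ℕ => Real.log (2 * (R : ℝ) + c) / (R : ℝ))
      Filter.atTop (nhds 0) := by
  have h1 := Real.tendsto_pow_log_div_mul_add_atTop (1/2) (-c/2) 1 (by norm_num)
  have h2 : Filter.Tendsto (fun x : ℝ => 2 * x + c) Filter.atTop Filter.atTop :=
    (Filter.tendsto_atTop_add_const_right _ c
      (Filter.Tendsto.const_mul_atTop (by norm_num) Filter.tendsto_id))
  have h3 := h1.comp h2
  have h4 : Filter.Tendsto (fun x : ℝ => Real.log (2 * x + c) / x)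
      Filter.atTop (nhds 0) := by
    refine h3.congr' ?_
    filter_upwards [Filter.eventually_ne_atTop (0:ℝ)] with x hx
    simp only [Function.comp]
    rw [pow_one]
    congr 1
    field_simp
    ring
  exact h4.comp tendsto_natCast_atTop_atTop

end CritExpAux

namespace CritExpAux

variable {d : ℕ} (Γ : Subgroup (FreeGroup (Fin d))) (R : ℕ)

theorem ball_inj :
    Function.Injective
      (fun (x : {g : FreeGroup (Fin d) // g ∈ Γ ∧ FreeGroup.norm g ≤ R}) =>
        (fun k : Fin R => x.1.toWord[(k : ℕ)]? : Fin R → Option (Fin d × Bool))) := by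
  intro x y h
  have hW : x.1.toWord = y.1.toWord := by
    apply List.ext_getElem?
    intro i
    by_cases hi : i < R
    · exact congrFun h ⟨i, hi⟩
    · push_neg at hi
      rw [List.getElem?_eq_none, List.getElem?_eq_none]
      · exact le_trans y.2.2 hi
      · exact le_trans x.2.2 hi
  exact Subtype.ext (FreeGroup.toWord_injective hW)

instance ball_finite : Finite {g : FreeGroup (Fin d) // g ∈ Γ ∧ FreeGroup.norm g ≤ R} :=
  Finite.of_injective _ (ball_inj Γ R)

theorem growthCount_pos : 0 < growthCount Γ R := by
  have : Nonempty {g : FreeGroup (Fin d) // g ∈ Γ ∧ FreeGroup.norm g ≤ R} :=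
    ⟨⟨1, Γ.one_mem, by simp⟩⟩
  exact Nat.card_pos

theorem growthCount_le : growthCount Γ R ≤ (2 * d + 1) ^ R := by
  have h := Nat.card_le_card_of_injective _ (ball_inj Γ R)
  refine h.trans (le_of_eq ?_)
  simp [Nat.card_eq_fintype_card]
  ring

theorem bdd : ∀ R : ℕ, Real.log (growthCount Γ R : ℝ) / (R : ℝ) ≤ Real.log (2 * d + 1) := by
  intro R
  rcases Nat.eq_zero_or_pos R with rfl | hR
  · simp
    refine Real.log_nonneg ?_
    have : (0:ℝ) ≤ d := Nat.cast_nonneg d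
    linarith
  · rw [div_le_iff₀ (by positivity)]
    calc Real.log (growthCount Γ R : ℝ)
        ≤ Real.log (((2 * d + 1) ^ R : ℕ) : ℝ) := by
          apply Real.log_le_log (by exact_mod_cast growthCount_pos Γ R)
          exact_mod_cast growthCount_le Γ R
      _ = R * Real.log (2 * d + 1) := by
          push_cast
          rw [Real.log_pow]
      _ ≤ Real.log (2 * d + 1) * R := by ring_nf; rfl

theorem isBounded :
    Filter.IsBoundedUnder (· ≤ ·) Filter.atTop
      (fun R : ℕ => Real.log (growthCount Γ R : ℝ) / (R : ℝ)) :=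
  Filter.isBoundedUnder_of ⟨Real.log (2 * d + 1), bdd Γ⟩

end CritExpAux

namespace CritExpAux

section PosWords

variable {α : Type*} [DecidableEq α] {γ : Type*}

theorem chain_true (l : List γ) (f : γ → α) :
    List.Chain' Ok (l.map fun x => ((f x, true) : α × Bool)) := by
  induction l with
  | nil => simp [List.Chain']
  | cons a l ih =>
    rw [List.map_cons]
    refine List.isChain_cons.mpr ⟨?_, ih⟩
    intro y hy
    have hy2 : y.2 = true := by
      have hmem := List.mem_of_mem_head? hy
      simp only [List.mem_map] at hmem
      obtain ⟨x, _, rfl⟩ := hmem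
      rfl
    simp [Ok, hy2]

theorem mk_true_injective {f : γ → α} (hf : Function.Injective f) :
    Function.Injective (fun l : List γ => FreeGroup.mk (l.map fun x => ((f x, true) : α × Bool))) := by
  intro l1 l2 h
  have h1 := congrArg FreeGroup.toWord h
  rw [FreeGroup.toWord_mk, FreeGroup.toWord_mk,
    reduce_eq_self_of_chain' (chain_true l1 f),
    reduce_eq_self_of_chain' (chain_true l2 f)] at h1
  have hinj : Function.Injective (fun x : γ => ((f x, true) : α × Bool)) := by
    intro a b hab
    exact hf (congrArg Prod.fst hab)
  exact List.map_injective_iff.mpr hinj h1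

theorem mk_true_eq_prod (f : γ → α) (l : List γ) :
    FreeGroup.mk (l.map fun x => ((f x, true) : α × Bool)) =
      (l.map fun x => FreeGroup.of (f x)).prod := by
  induction l with
  | nil => simp [FreeGroup.one_eq_mk]
  | cons a l ih =>
    rw [List.map_cons, List.map_cons, List.prod_cons, ← ih]
    rw [show FreeGroup.of (f a) = FreeGroup.mk [(f a, true)] from rfl, FreeGroup.mul_mk]
    rfl

theorem norm_list_prod_le (l : List (FreeGroup α)) (C : ℕ)
    (h : ∀ x ∈ l, FreeGroup.norm x ≤ C) :
    FreeGroup.norm l.prod ≤ l.length * C := by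
  induction l with
  | nil => simp
  | cons a l ih =>
    rw [List.prod_cons, List.length_cons]
    calc FreeGroup.norm (a * l.prod) ≤ FreeGroup.norm a + FreeGroup.norm l.prod :=
          FreeGroup.norm_mul_le _ _
      _ ≤ C + l.length * C := by
          refine add_le_add (h a List.mem_cons_self) (ih fun x hx => h x (List.mem_cons_of_mem _ hx))
      _ ≤ (l.length + 1) * C := by ring_nf; omega

end PosWords

section Main

variable {d : ℕ}

theorem critExp_eq_zero_of_cyclic (Γ : Subgroup (FreeGroup (Fin d)))
    (g : FreeGroup (Fin d)) (hΓ : Γ = Subgroup.closure {g}) : critExp Γ = 0 := by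
  subst hΓ
  rcases eq_or_ne g 1 with rfl | hg
  · have hone : ∀ R : ℕ, growthCount (Subgroup.closure {(1 : FreeGroup (Fin d))}) R = 1 := by
      intro R
      rw [growthCount, Nat.card_eq_one_iff_unique]
      constructor
      · constructor
        rintro ⟨x, hx, -⟩ ⟨y, hy, -⟩
        rw [Subgroup.closure_singleton_one, Subgroup.mem_bot] at hx hy
        simp [hx, hy]
      · exact ⟨1, Subgroup.one_mem _, by simp⟩
    have : (fun R : ℕ => Real.log (growthCount (Subgroup.closure {(1 : FreeGroup (Fin d))}) R : ℝ) / (R : ℝ))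
        = fun _ : ℕ => (0 : ℝ) := by
      funext R
      rw [hone R]
      simp
    rw [critExp, this, Filter.limsup_const]
  · obtain ⟨K, hK⟩ := growth_cyclic g hg
    have h0 : ∀ R : ℕ, 0 ≤ Real.log (growthCount (Subgroup.closure {g}) R : ℝ) / (R : ℝ) :=
      fun R => div_nonneg (Real.log_natCast_nonneg _) (Nat.cast_nonneg R)
    have hle : ∀ R : ℕ, Real.log (growthCount (Subgroup.closure {g}) R : ℝ) / (R : ℝ)
        ≤ Real.log (2 * (R : ℝ) + (2 * K + 1)) / (R : ℝ) := by
      intro R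
      have hcount : (growthCount (Subgroup.closure {g}) R : ℝ) ≤ 2 * (R : ℝ) + (2 * K + 1) := by
        have hnat : growthCount (Subgroup.closure {g}) R ≤ 2 * (R + K) + 1 := hK R
        have h2 : (growthCount (Subgroup.closure {g}) R : ℝ) ≤ ((2 * (R + K) + 1 : ℕ) : ℝ) :=
          Nat.cast_le.mpr hnat
        push_cast at h2
        linarith
      gcongr
      · exact_mod_cast growthCount_pos _ R
    have htend := squeeze_zero h0 hle (tendsto_log_lin (2 * K + 1))
    exact htend.limsup_eq

end Main

end CritExpAux

namespace CritExpAux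

theorem subsingleton_freeGroup_of_isEmpty {ι : Type*} (he : IsEmpty ι) :
    Subsingleton (FreeGroup ι) := by
  constructor
  intro u v
  have key : ∀ x : FreeGroup ι, x = 1 := by
    intro x
    rw [← FreeGroup.toWord_eq_nil_iff]
    cases hx : x.toWord with
    | nil => rfl
    | cons a t => exact (he.false a.1).elim
  rw [key u, key v]

theorem cyclic_of_subsingleton_basis {d : ℕ} {Γ : Subgroup (FreeGroup (Fin d))} {ι : Type*}
    (b : FreeGroupBasis ι ↥Γ) (hs : Subsingleton ι) :
    ∃ g : FreeGroup (Fin d), Γ = Subgroup.closure {g} := by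
  rcases isEmpty_or_nonempty ι with he | ⟨⟨i0⟩⟩
  · refine ⟨1, ?_⟩
    rw [Subgroup.closure_singleton_one, eq_bot_iff]
    intro x hx
    rw [Subgroup.mem_bot]
    have hsub : Subsingleton (FreeGroup ι) := subsingleton_freeGroup_of_isEmpty he
    have : (⟨x, hx⟩ : ↥Γ) = 1 := b.repr.injective (Subsingleton.elim _ _)
    exact congrArg Subtype.val this
  · refine ⟨((b i0 : ↥Γ) : FreeGroup (Fin d)), ?_⟩
    have hrange : Set.range (FreeGroup.of : ι → FreeGroup ι) = {FreeGroup.of i0} := by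
      ext x
      constructor
      · rintro ⟨i, rfl⟩
        rw [Subsingleton.elim i i0]
        rfl
      · intro hx
        exact ⟨i0, (Set.mem_singleton_iff.mp hx).symm⟩
    have htop : Subgroup.closure {FreeGroup.of i0} = (⊤ : Subgroup (FreeGroup ι)) := by
      rw [← hrange, FreeGroup.closure_range_of]
    have h1 : Subgroup.closure {b.repr.symm (FreeGroup.of i0)} = (⊤ : Subgroup ↥Γ) := by
      have himg : ({b.repr.symm (FreeGroup.of i0)} : Set ↥Γ)
          = b.repr.symm.toMonoidHom '' {FreeGroup.of i0} := by
        rw [Set.image_singleton]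
        rfl
      rw [himg, ← MonoidHom.map_closure, htop,
        Subgroup.map_top_of_surjective _ b.repr.symm.surjective]
    have h2 : Γ = Subgroup.map Γ.subtype ⊤ := by
      rw [← MonoidHom.range_eq_map, Subgroup.range_subtype]
    calc Γ = Subgroup.map Γ.subtype ⊤ := h2
      _ = Subgroup.map Γ.subtype (Subgroup.closure {b.repr.symm (FreeGroup.of i0)}) := by
          rw [h1]
      _ = Subgroup.closure (Γ.subtype '' {b.repr.symm (FreeGroup.of i0)}) :=
          MonoidHom.map_closure _ _
      _ = Subgroup.closure {((b i0 : ↥Γ) : FreeGroup (Fin d))} := by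
          rw [Set.image_singleton]
          rfl

theorem coe_symm_mk_true {d : ℕ} {Γ : Subgroup (FreeGroup (Fin d))} {ι : Type*}
    (b : FreeGroupBasis ι ↥Γ) (l : List ι) :
    ((b.repr.symm (FreeGroup.mk (l.map fun x => ((x, true) : ι × Bool))) : ↥Γ)
        : FreeGroup (Fin d))
      = (l.map fun x => ((b x : ↥Γ) : FreeGroup (Fin d))).prod := by
  induction l with
  | nil =>
    simp [← FreeGroup.one_eq_mk]
  | cons a l ih =>
    rw [List.map_cons, List.map_cons, List.prod_cons, ← ih]
    have : FreeGroup.mk (((a, true) : ι × Bool) :: l.map fun x => ((x, true) : ι × Bool))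
        = FreeGroup.of a * FreeGroup.mk (l.map fun x => ((x, true) : ι × Bool)) := by
      rw [show FreeGroup.of a = FreeGroup.mk [(a, true)] from rfl, FreeGroup.mul_mk]
      rfl
    rw [this, MulEquiv.map_mul]
    rfl

theorem critExp_pos_of_not_cyclic {d : ℕ} (Γ : Subgroup (FreeGroup (Fin d)))
    (h : ¬ ∃ g : FreeGroup (Fin d), Γ = Subgroup.closure {g}) : 0 < critExp Γ := by
  obtain ⟨ι, ⟨b⟩⟩ := (subgroupIsFreeOfIsFree Γ).nonempty_basis
  have hnt : Nontrivial ι := by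
    rcases subsingleton_or_nontrivial ι with hs | hs
    · exact absurd (cyclic_of_subsingleton_basis b hs) h
    · exact hs
  obtain ⟨i, j, hij⟩ := exists_pair_ne ι
  set A : FreeGroup (Fin d) := ((b i : ↥Γ) : FreeGroup (Fin d)) with hA
  set B : FreeGroup (Fin d) := ((b j : ↥Γ) : FreeGroup (Fin d)) with hB
  set C := max (max (FreeGroup.norm A) (FreeGroup.norm B)) 1 with hC
  have hC1 : 1 ≤ C := le_max_right _ _
  have hcount : ∀ n : ℕ, 2 ^ n ≤ growthCount Γ (n * C) := by
    intro n
    set elt : Bool → FreeGroup (Fin d) := fun t => if t then A else B with helt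
    set idx : Bool → ι := fun t => if t then i else j with hidx
    have hprod : ∀ w : Fin n → Bool,
        ((List.ofFn w).map elt).prod
          = ((b.repr.symm (FreeGroup.mk (((List.ofFn w).map idx).map
              fun x => ((x, true) : ι × Bool))) : ↥Γ) : FreeGroup (Fin d)) := by
      intro w
      rw [coe_symm_mk_true b, List.map_map]
      congr 1
      apply List.map_congr_left
      intro t _
      cases t <;> rfl
    have hQmem : ∀ w : Fin n → Bool, ((List.ofFn w).map elt).prod ∈ Γ := by
      intro w
      rw [hprod w]
      exact (b.repr.symm _).2
    have hQnorm : ∀ w : Fin n → Bool,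
        FreeGroup.norm (((List.ofFn w).map elt).prod) ≤ n * C := by
      intro w
      have hlen := norm_list_prod_le ((List.ofFn w).map elt) C ?_
      · simpa using hlen
      · intro x hx
        simp only [List.mem_map] at hx
        obtain ⟨t, -, rfl⟩ := hx
        cases t
        · exact le_trans (le_max_right _ _) (le_max_left _ _)
        · exact le_trans (le_max_left _ _) (le_max_left _ _)
    set Q : (Fin n → Bool) → {g : FreeGroup (Fin d) // g ∈ Γ ∧ FreeGroup.norm g ≤ n * C} :=
      fun w => ⟨((List.ofFn w).map elt).prod, hQmem w, hQnorm w⟩ with hQ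
    have hQinj : Function.Injective Q := by
      intro w1 w2 hw
      have hval : ((List.ofFn w1).map elt).prod = ((List.ofFn w2).map elt).prod :=
        congrArg Subtype.val hw
      rw [hprod w1, hprod w2] at hval
      have h2 := b.repr.symm.injective (Subtype.ext hval)
      letI : DecidableEq ι := Classical.decEq ι
      have h3 : ((List.ofFn w1).map idx) = ((List.ofFn w2).map idx) :=
        mk_true_injective (f := (id : ι → ι)) Function.injective_id h2
      have hidxinj : Function.Injective idx := by
        intro t1 t2 ht
        cases t1 <;> cases t2 <;> first | rfl | (exact absurd ht.symm hij) | (exact absurd ht hij)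
      have h4 := List.map_injective_iff.mpr hidxinj h3
      exact List.ofFn_inj.mp h4
    have hcard := Nat.card_le_card_of_injective Q hQinj
    have h5 : Nat.card (Fin n → Bool) = 2 ^ n := by
      simp [Nat.card_eq_fintype_card]
    rw [h5] at hcard
    exact hcard
  -- frequently bound
  have hfreq : ∃ᶠ R in Filter.atTop,
      Real.log 2 / (C : ℝ) ≤ Real.log (growthCount Γ R : ℝ) / (R : ℝ) := by
    rw [Filter.frequently_atTop]
    intro N
    refine ⟨(N + 1) * C, ?_, ?_⟩
    · calc N ≤ N + 1 := Nat.le_succ N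
        _ = (N + 1) * 1 := (mul_one _).symm
        _ ≤ (N + 1) * C := Nat.mul_le_mul_left _ hC1
    · set n := N + 1 with hn
      have hc := hcount n
      have hlog : Real.log ((2 : ℝ) ^ n) ≤ Real.log (growthCount Γ (n * C) : ℝ) := by
        apply Real.log_le_log (by positivity)
        exact_mod_cast hc
      have hR : (0 : ℝ) < ((n * C : ℕ) : ℝ) := by
        have : 0 < n * C := Nat.mul_pos (Nat.succ_pos N) (lt_of_lt_of_le Nat.one_pos hC1)
        exact_mod_cast this
      have hdiv : Real.log ((2 : ℝ) ^ n) / ((n * C : ℕ) : ℝ)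
          ≤ Real.log (growthCount Γ (n * C) : ℝ) / ((n * C : ℕ) : ℝ) := by
        gcongr
      refine le_trans (le_of_eq ?_) hdiv
      have hCpos : (0 : ℝ) < (C : ℝ) := by exact_mod_cast lt_of_lt_of_le Nat.one_pos hC1
      have hnpos : (0 : ℝ) < (n : ℝ) := by exact_mod_cast Nat.succ_pos N
      rw [Real.log_pow]
      push_cast
      field_simp
  have hb := isBounded Γ
  have hlim : Real.log 2 / (C : ℝ) ≤ critExp Γ :=
    Filter.le_limsup_of_frequently_le hfreq hb
  have hpos : 0 < Real.log 2 / (C : ℝ) := by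
    apply div_pos (Real.log_pos one_lt_two)
    exact_mod_cast lt_of_lt_of_le Nat.one_pos hC1
  linarith

end CritExpAux

open CritExpAux in
theorem critExp_eq_zero_iff_cyclic (d : ℕ) (hd : 2 ≤ d) (Γ : Subgroup (FreeGroup (Fin d))) :
    critExp Γ = 0 ↔ ∃ g : FreeGroup (Fin d), Γ = Subgroup.closure {g} := by
  constructor
  · intro h0
    by_contra hnc
    have hpos := critExp_pos_of_not_cyclic Γ hnc
    rw [h0] at hpos
    exact lt_irrefl 0 hpos
  · rintro ⟨g, hg⟩
    exact critExp_eq_zero_of_cyclic Γ g hg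
end

section
/- For every natural number n ≥ 2 there exists a unique real number x in the open interval (0,1) with 2x^n + x − 1 = 0, and this root satisfies exp(−1/√n) ≤ x ≤ exp(−1/n). -/
open Filter

set_option maxHeartbeats 1000000 in
theorem root_of_kwon_park_polynomial (n : ℕ) (hn : 2 ≤ n) :
    (∃! x : ℝ, x ∈ Set.Ioo (0 : ℝ) 1 ∧ 2 * x ^ n + x - 1 = 0) ∧
    ∀ x : ℝ, x ∈ Set.Ioo (0 : ℝ) 1 → 2 * x ^ n + x - 1 = 0 →
      Real.exp (-1 / Real.sqrt (n : ℝ)) ≤ x ∧ x ≤ Real.exp (-1 / (n : ℝ)) := by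
  have hn0 : n ≠ 0 := by omega
  have hnR : (0:ℝ) < n := by positivity
  have hnR2 : (2:ℝ) ≤ n := by exact_mod_cast hn
  set f : ℝ → ℝ := fun x => 2 * x ^ n + x - 1 with hf
  have hmono : ∀ x y : ℝ, 0 ≤ x → x < y → f x < f y := by
    intro x y hx hxy
    have := pow_lt_pow_left₀ hxy hx hn0
    simp only [hf]; nlinarith
  have hc : ContinuousOn f (Set.Icc (0:ℝ) 1) := by fun_prop
  have hf0 : f 0 = -1 := by simp [hf, zero_pow hn0]
  have hf1 : f 1 = 2 := by norm_num [hf]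
  obtain ⟨x₀, hx₀, hfx₀⟩ : ∃ x ∈ Set.Ioo (0:ℝ) 1, f x = 0 := by
    have h := intermediate_value_Ioo (zero_le_one) hc
    have h0 : (0:ℝ) ∈ Set.Ioo (f 0) (f 1) := by rw [hf0, hf1]; norm_num
    obtain ⟨x, hx, hfx⟩ := h h0
    exact ⟨x, hx, hfx⟩
  refine ⟨⟨x₀, ⟨hx₀, hfx₀⟩, ?_⟩, ?_⟩
  · rintro y ⟨hy, hfy⟩
    rcases lt_trichotomy y x₀ with h | h | h
    · exact absurd (hfy.trans hfx₀.symm) (ne_of_lt (hmono _ _ hy.1.le h))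
    · exact h
    · exact absurd (hfx₀.trans hfy.symm) (ne_of_lt (hmono _ _ hx₀.1.le h))
  · intro x hx hfx
    have hfx' : f x = 0 := hfx
    constructor
    · -- lower bound
      set t := Real.sqrt (n:ℝ) with htdef
      have ht0 : 0 < t := Real.sqrt_pos.mpr hnR
      have ht2 : t ^ 2 = n := Real.sq_sqrt hnR.le
      set b := Real.exp (-1 / t) with hbdef
      have hb0 : 0 < b := Real.exp_pos _
      have hbn : b ^ n = Real.exp (-t) := by
        rw [hbdef, ← Real.exp_nat_mul]
        congr 1
        field_simp
        nlinarith
      have hfb : f b ≤ 0 := by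
        rcases eq_or_lt_of_le hn with h2 | h3
        · -- n = 2
          have hn2 : (n:ℝ) = 2 := by norm_cast; omega
          have ht2' : t ^ 2 = 2 := by rw [ht2, hn2]
          set s := 1 / t with hsdef
          have hs0 : 0 < s := by positivity
          have hs2 : s ^ 2 = 1/2 := by rw [hsdef]; field_simp; linarith [ht2']
          have hsum : (2:ℝ) ≤ Real.exp s := by
            have h4 := Real.sum_le_exp_of_nonneg hs0.le 4
            have heq : ∑ i ∈ Finset.range 4, s ^ i / (Nat.factorial i) =
                1 + s + s^2/2 + s^3/6 := by
              simp [Finset.sum_range_succ, Nat.factorial]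
            rw [heq] at h4
            nlinarith [sq_nonneg (s - 9/13)]
          have hb12 : b ≤ 1/2 := by
            have : b = (Real.exp s)⁻¹ := by
              rw [hbdef, ← Real.exp_neg, hsdef]; ring_nf
            rw [this]
            rw [inv_le_comm₀ (Real.exp_pos s) (by norm_num)]
            linarith
          have hpow : b ^ n = b ^ 2 := by
            congr 1
            omega
          simp only [hf]
          rw [hpow]
          nlinarith
        · -- n ≥ 3
          have ht3 : (3:ℝ) ≤ t ^ 2 := by rw [ht2]; exact_mod_cast h3
          have ht1 : (1:ℝ) ≤ t := by nlinarith
          have hexp : 2 * t + 2 ≤ Real.exp t := by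
            have h6 := Real.sum_le_exp_of_nonneg ht0.le 6
            have heq : ∑ i ∈ Finset.range 6, t ^ i / (Nat.factorial i) =
                1 + t + t^2/2 + t^3/6 + t^4/24 + t^5/120 := by
              simp [Finset.sum_range_succ, Nat.factorial]
            rw [heq] at h6
            nlinarith [sq_nonneg (t-2), sq_nonneg (t-1), mul_nonneg (mul_nonneg ht0.le ht0.le) ht0.le]
          have hbt : Real.exp (-t) ≤ 1 / (2*t+2) := by
            rw [Real.exp_neg, inv_eq_one_div]
            apply one_div_le_one_div_of_le (by linarith) hexp
          have hble : b ≤ t / (t + 1) := by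
            have h1 : 1/t + 1 ≤ Real.exp (1/t) := Real.add_one_le_exp _
            have hb' : b = (Real.exp (1/t))⁻¹ := by
              rw [hbdef, ← Real.exp_neg]; ring_nf
            rw [hb', inv_eq_one_div]
            have h1t : (0:ℝ) < 1/t + 1 := by positivity
            have : 1 / Real.exp (1/t) ≤ 1 / (1/t + 1) :=
              one_div_le_one_div_of_le h1t h1
            have heq2 : 1 / (1/t + 1) = t / (t+1) := by
              rw [div_add_one ht0.ne', one_div_div, add_comm]
            linarith [heq2 ▸ this]
          simp only [hf]
          rw [hbn]
          have h2t : 2 / (2*t+2) = 1/(t+1) := by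
            field_simp
          have : b ≤ t/(t+1) := hble
          have htp : (0:ℝ) < t + 1 := by linarith
          have hsum1 : t/(t+1) + 1/(t+1) = 1 := by field_simp
          have h2' : 2 * (1/(2*t+2)) = 1/(t+1) := by rw [mul_one_div]; exact h2t
          nlinarith [hbt, hble, hsum1, h2']
      rcases lt_or_ge x b with h | h
      · exfalso
        have hlt := hmono x b hx.1.le h
        rw [hfx'] at hlt
        linarith
      · exact h
    · -- upper bound
      set a := Real.exp (-1 / (n:ℝ)) with hadef
      have ha0 : 0 < a := Real.exp_pos _
      have han : a ^ n = Real.exp (-1) := by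
        rw [hadef, ← Real.exp_nat_mul]
        congr 1
        field_simp
      have ha1 : 1 - 1/(n:ℝ) ≤ a := by
        have := Real.add_one_le_exp (-1/(n:ℝ))
        rw [hadef]
        have hneg : (-1:ℝ)/(n:ℝ) = -(1/(n:ℝ)) := by ring
        linarith [this, hneg.ge, hneg.le]
      have hfa : 0 ≤ f a := by
        simp only [hf]
        rw [han]
        have he : Real.exp 1 < 2.7182818286 := Real.exp_one_lt_d9
        have he0 : 0 < Real.exp 1 := Real.exp_pos 1
        have hinv : Real.exp (-1) = (Real.exp 1)⁻¹ := Real.exp_neg 1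
        have hkey : (1:ℝ)/2.7182818286 < Real.exp (-1) := by
          rw [hinv, inv_eq_one_div]
          exact one_div_lt_one_div_of_lt he0 he
        have h1n : 1/(n:ℝ) ≤ 1/2 := by
          apply one_div_le_one_div_of_le (by norm_num) hnR2
        nlinarith
      rcases lt_or_ge a x with h | h
      · exfalso
        have hlt := hmono a x ha0.le h
        rw [hfx'] at hlt
        linarith
      · exact h
end
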